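/- Let w = u·a·v·b·Sym(u)·b be an element of F_n, where u·a is the principal prefix of w. If v = λ (the empty word), then w = a^n·b^{n+1}. -/

import Mathlib

/-- The two-letter alphabet {a, b}. -/
inductive Letter : Type
  | a : Letter
  | b : Letter
deriving DecidableEq, BEq, Repr

/-- Words over the alphabet {a, b}. -/
abbrev Word := List Letter

/-- δ(w) = |w|_a − |w|_b. -/
def delta (w : Word) : ℤ := (w.count Letter.a : ℤ) - (w.count Letter.b : ℤ)

/-- A Dyck word: δ(w) = 0 and δ(p) ≥ 0 for every prefix p of w. -/
def IsDyck (w : Word) : Prop := delta w = 0 ∧ ∀ p : Word, p <+: w → 0 ≤ delta p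

/-- Membership in D_n: w = d·b with d a Dyck word of length 2n. -/
def InD (n : ℕ) (w : Word) : Prop :=
  ∃ d : Word, IsDyck d ∧ d.length = 2 * n ∧ w = d ++ [Letter.b]

/-- Exchanging the letters a and b. -/
def Letter.flip : Letter → Letter
  | .a => .b
  | .b => .a

/-- The complement w̄ of a word w. -/
def comp (w : Word) : Word := w.map Letter.flip

/-- Sym(w): the complement of the mirror (reversal) of w. -/
def sym (w : Word) : Word := comp w.reverse

/-- A palindrome: a word equal to its mirror. -/
def Palindrome (w : Word) : Prop := w.reverse = w

/-- w' is a conjugate of w: w = u·v and w' = v·u. -/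
def Conj (w w' : Word) : Prop := ∃ u v : Word, w = u ++ v ∧ w' = v ++ u

/-- u is the principal prefix of w: the shortest prefix of w with δ(u) maximal. -/
def IsPrincipalPrefix (u w : Word) : Prop :=
  u <+: w ∧ (∀ p : Word, p <+: w → delta p ≤ delta u) ∧
    (∀ p : Word, p <+: w → delta p = delta u → u.length ≤ p.length)

/-- The graph of the map γ: writing w = u·v·b with u the principal prefix of w,
    γ(w) = v̄·b·ū. -/
def GammaRel (w w' : Word) : Prop :=
  ∃ u v : Word, IsPrincipalPrefix u w ∧ w = u ++ v ++ [Letter.b] ∧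
    w' = comp v ++ [Letter.b] ++ comp u

/-- F_n: the fixed points of γ in D_n. -/
def InF (n : ℕ) (w : Word) : Prop := InD n w ∧ GammaRel w w

/-- F_γ = ⋃_{n ≥ 1} F_n. -/
def InFgamma (w : Word) : Prop := ∃ n : ℕ, 1 ≤ n ∧ InF n w

/-- x^y: concatenation of the word x with itself y times. -/
def wpow (x : Word) : ℕ → Word
  | 0 => []
  | k + 1 => x ++ wpow x k

lemma letter_flip_flip (x : Letter) : x.flip.flip = x := by cases x <;> rfl

lemma comp_comp (w : Word) : comp (comp w) = w := by
  simp [comp, List.map_map, Function.comp_def, letter_flip_flip]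

lemma pp_unique {u u' w : Word} (h1 : IsPrincipalPrefix u w)
    (h2 : IsPrincipalPrefix u' w) : u = u' := by
  obtain ⟨hp1, hmax1, hmin1⟩ := h1
  obtain ⟨hp2, hmax2, hmin2⟩ := h2
  have hd : delta u = delta u' := le_antisymm (hmax2 u hp1) (hmax1 u' hp2)
  have hl : u.length = u'.length :=
    le_antisymm (hmin1 u' hp2 hd.symm) (hmin2 u hp1 hd)
  exact (List.prefix_of_prefix_length_le hp1 hp2 (le_of_eq hl)).eq_of_length hl

lemma eq_rep (x : Letter) : ∀ u : Word, u ++ [x] = x :: u →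
    u = List.replicate u.length x := by
  intro u
  induction u with
  | nil => intro _; rfl
  | cons y t ih =>
    intro h
    rw [List.cons_append] at h
    injection h with h1 h2
    subst h1
    rw [List.length_cons, List.replicate_succ]
    exact congrArg _ (ih h2)

/-- Proposition (iii): for w = u·a·v·b·Sym(u)·b ∈ F_n with u·a its principal
    prefix, if v is the empty word then w = a^n·b^{n+1}. -/
theorem prop_form_iii (n : ℕ) (w u v : Word) (hw : InF n w)
    (hdec : w = u ++ [Letter.a] ++ v ++ [Letter.b] ++ sym u ++ [Letter.b])
    (hpp : IsPrincipalPrefix (u ++ [Letter.a]) w)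
    (hv : v = []) :
    w = List.replicate n Letter.a ++ List.replicate (n + 1) Letter.b := by
  subst hv
  obtain ⟨⟨d, hdy, hdl, hdw⟩, u', v', hpp', hsplit, hfix⟩ := hw
  have hu' : u' = u ++ [Letter.a] := pp_unique hpp' hpp
  subst hu'
  -- identify v'
  have hv' : v' = [Letter.b] ++ sym u := by
    have h := hsplit.symm.trans hdec
    simp [List.append_assoc] at h
    have h1' : v' ++ [Letter.b] = ([Letter.b] ++ sym u) ++ [Letter.b] := by
      simpa [List.append_assoc] using h
    exact List.append_cancel_right h1'
  subst hv'
  -- rewrite the fixed-point equation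
  have hfix' : (u ++ [Letter.a]) ++ ([Letter.b] ++ (sym u ++ [Letter.b]))
      = ([Letter.a] ++ u.reverse) ++ ([Letter.b] ++ (comp u ++ [Letter.b])) := by
    have h := hdec.symm.trans hfix
    simp only [comp, sym, List.map_append, List.map_reverse, List.map_map] at h ⊢
    simpa [List.append_assoc, Function.comp_def, letter_flip_flip, Letter.flip.eq_1, Letter.flip.eq_2] using h
  have hlen : (u ++ [Letter.a]).length = ([Letter.a] ++ u.reverse).length := by simp
  obtain ⟨ha, hb⟩ := List.append_inj hfix' hlen
  -- u is a palindrome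
  have hsym : sym u = comp u := by
    have := List.append_cancel_left hb
    exact List.append_cancel_right this
  have hpal : u.reverse = u := by
    have : comp (sym u) = comp (comp u) := congrArg comp hsym
    rwa [sym, comp_comp, comp_comp] at this
  rw [hpal] at ha
  have hrep : u = List.replicate u.length Letter.a := by
    apply eq_rep
    simpa using ha
  -- determine n
  have hwl1 : w.length = 2 * n + 1 := by rw [hdw]; simp [hdl]
  have hwl2 : w.length = 2 * u.length + 3 := by
    rw [hdec]; simp [sym, comp]; omega
  have hn : n = u.length + 1 := by omega
  -- conclude
  rw [hdec, hn]
  rw [hrep]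
  have key : ∀ (k : ℕ) (x : Letter) (l : Word),
      List.replicate k x ++ x :: l = x :: (List.replicate k x ++ l) := by
    intro k x l; induction k with
    | zero => simp
    | succ k ih => simp [List.replicate_succ, ih]
  simp [sym, comp, Letter.flip, List.replicate_succ, List.replicate_succ',
    List.append_assoc, key]
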